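/- arXiv:1709.06584 — 5 statements merged into one kernel-verified Lean document; each statement's English description precedes it below -/
import Mathlib

section
/- Let p : ℤ → ℝ satisfy p(k) ≥ 0 for all k and p(k) = 0 for |k| > R, where R > 1 is an integer. If ν̄ is an invariant probability measure for the generator L of the ASEP on ℤ with a blockage at the origin, then the mean current is constant away from the blockage: ⟨ν̄, C_{x,x+1}⟩ = ⟨ν̄, C_{-1,1}⟩ for every integer x with x ≠ -1 and x ≠ 0. -/
open MeasureTheory Filter
open scoped NNReal

/-- A configuration of the exclusion process: for each site `x : ℤ`,
whether the site is occupied. -/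
abbrev Config : Type := ℤ → Bool

/-- The occupation number `η(x) ∈ {0,1}` as a real number. -/
noncomputable def val (η : Config) (x : ℤ) : ℝ := if η x then 1 else 0

/-- The configuration `η^{x,y}` obtained from `η` by exchanging the values
at sites `x` and `y`. -/
def swapConf (η : Config) (x y : ℤ) : Config := fun z =>
  if z = x then η y else if z = y then η x else η z

/-- A local (cylinder) function: it depends on only finitely many coordinates. -/
def IsLocal (f : Config → ℝ) : Prop :=
  ∃ s : Finset ℤ, ∀ η ζ : Config, (∀ x ∈ s, η x = ζ x) → f η = f ζ

/-- The generator of the ASEP on `ℤ` with a blockage at the origin: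
`L f (η) = Σ_{x,y ≠ 0} p (y-x) η(x) (1-η(y)) (f(η^{x,y}) - f(η))`. -/
noncomputable def gen (p : ℤ → ℝ) (f : Config → ℝ) (η : Config) : ℝ :=
  ∑' q : ℤ × ℤ,
    if q.1 ≠ 0 ∧ q.2 ≠ 0 then
      p (q.2 - q.1) * val η q.1 * (1 - val η q.2) * (f (swapConf η q.1 q.2) - f η)
    else 0

/-- The current across the bond `(i,j)`:
`C_{i,j}(η) = Σ_{x ≤ i, y ≥ j, x ≠ 0, y ≠ 0}
  [p(y-x) η(x)(1-η(y)) - p(x-y) η(y)(1-η(x))]`. -/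
noncomputable def current (p : ℤ → ℝ) (i j : ℤ) (η : Config) : ℝ :=
  ∑' q : ℤ × ℤ,
    if q.1 ≤ i ∧ j ≤ q.2 ∧ q.1 ≠ 0 ∧ q.2 ≠ 0 then
      p (q.2 - q.1) * val η q.1 * (1 - val η q.2)
        - p (q.1 - q.2) * val η q.2 * (1 - val η q.1)
    else 0

/-- A measure `ν` is invariant for the generator `L` if `∫ L f dν = 0`
for every local function `f`. -/
def IsInvariantMeasure (p : ℤ → ℝ) (ν : Measure Config) : Prop :=
  ∀ f : Config → ℝ, IsLocal f → ∫ η, gen p f η ∂ν = 0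

/- ----------------------------------------------------------------- -/
/- Auxiliary lemmas                                                   -/
/- ----------------------------------------------------------------- -/

lemma val_swap (η : Config) (x y z : ℤ) :
    val (swapConf η x y) z =
      if z = x then val η y else if z = y then val η x else val η z := by
  simp only [val, swapConf]
  split_ifs <;> rfl

lemma measurable_val (x : ℤ) : Measurable fun η : Config => val η x := by
  have h1 : Measurable fun b : Bool => (if b then (1:ℝ) else 0) := Measurable.of_discrete
  exact h1.comp (measurable_pi_apply x)

/-- The current equals a finite sum over any finset containing its support. -/
lemma current_tsum_eq (R : ℤ) (hR : 1 < R) (p : ℤ → ℝ)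
    (hrange : ∀ k : ℤ, R < |k| → p k = 0) (i j : ℤ) (η : Config)
    (B : Finset (ℤ × ℤ))
    (hB : ∀ q : ℤ × ℤ, q.1 ≤ i → j ≤ q.2 → q.2 - q.1 ≤ R → q ∈ B) :
    current p i j η = ∑ q ∈ B,
      (if q.1 ≤ i ∧ j ≤ q.2 ∧ q.1 ≠ 0 ∧ q.2 ≠ 0 then
        p (q.2 - q.1) * val η q.1 * (1 - val η q.2)
          - p (q.1 - q.2) * val η q.2 * (1 - val η q.1)
      else 0) := by
  simp only [current]
  refine tsum_eq_sum fun q hq => ?_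
  split_ifs with h
  · obtain ⟨h1, h2, h3, h4⟩ := h
    by_cases hd : q.2 - q.1 ≤ R
    · exact absurd (hB q h1 h2 hd) hq
    · have h5 : p (q.2 - q.1) = 0 := hrange _ (by rw [abs_of_pos (by omega)]; omega)
      have h6 : p (q.1 - q.2) = 0 := hrange _ (by rw [abs_of_neg (by omega)]; omega)
      rw [h5, h6]; ring
  · rfl

/-- The generator applied to `η ↦ η(i)` equals a finite sum over any finset
containing its support. -/
lemma gen_tsum_eq (R : ℤ) (p : ℤ → ℝ)
    (hrange : ∀ k : ℤ, R < |k| → p k = 0) (i : ℤ) (η : Config)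
    (B : Finset (ℤ × ℤ))
    (hB : ∀ q : ℤ × ℤ, (q.1 = i ∨ q.2 = i) → |q.2 - q.1| ≤ R → q ∈ B) :
    gen p (fun η => val η i) η = ∑ q ∈ B,
      (if q.1 ≠ 0 ∧ q.2 ≠ 0 then
        p (q.2 - q.1) * val η q.1 * (1 - val η q.2)
          * (val (swapConf η q.1 q.2) i - val η i)
      else 0) := by
  simp only [gen]
  refine tsum_eq_sum fun q hq => ?_
  split_ifs with h
  · by_cases hxi : q.1 = i
    · by_cases hd : |q.2 - q.1| ≤ R
      · exact absurd (hB q (Or.inl hxi) hd) hq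
      · rw [hrange _ (not_le.mp hd)]; ring
    · by_cases hyi : q.2 = i
      · by_cases hd : |q.2 - q.1| ≤ R
        · exact absurd (hB q (Or.inr hyi) hd) hq
        · rw [hrange _ (not_le.mp hd)]; ring
      · rw [val_swap, if_neg (Ne.symm hxi), if_neg (Ne.symm hyi)]
        ring
  · rfl

set_option maxHeartbeats 2000000 in
/-- Cancellation of the summands of `C_{i,i+1} + L(η(i)) - C_{i-1,i}` under
exchanging the two indices. -/
lemma pair_cancel (p : ℤ → ℝ) (i : ℤ) (hi : i ≠ 0) (η : Config) (x y : ℤ) :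
    ((if x ≤ i ∧ i + 1 ≤ y ∧ x ≠ 0 ∧ y ≠ 0 then
        p (y - x) * val η x * (1 - val η y) - p (x - y) * val η y * (1 - val η x)
      else 0)
     + (if x ≠ 0 ∧ y ≠ 0 then
        p (y - x) * val η x * (1 - val η y) * (val (swapConf η x y) i - val η i)
      else 0)
     - (if x ≤ i - 1 ∧ i ≤ y ∧ x ≠ 0 ∧ y ≠ 0 then
        p (y - x) * val η x * (1 - val η y) - p (x - y) * val η y * (1 - val η x)
      else 0))
    + ((if y ≤ i ∧ i + 1 ≤ x ∧ y ≠ 0 ∧ x ≠ 0 then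
        p (x - y) * val η y * (1 - val η x) - p (y - x) * val η x * (1 - val η y)
      else 0)
     + (if y ≠ 0 ∧ x ≠ 0 then
        p (x - y) * val η y * (1 - val η x) * (val (swapConf η y x) i - val η i)
      else 0)
     - (if y ≤ i - 1 ∧ i ≤ x ∧ y ≠ 0 ∧ x ≠ 0 then
        p (x - y) * val η y * (1 - val η x) - p (y - x) * val η x * (1 - val η y)
      else 0)) = 0 := by
  rw [val_swap, val_swap]
  simp only [val]
  split_ifs <;>
    first
      | omega
      | ring1
      | (subst_vars; contradiction)

/-- For an invariant measure of the ASEP with a blockage at the origin,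
the mean current across each bond `(x, x+1)` away from the blockage equals
the mean current across the bond `(-1, 1)`. -/
theorem constant_current_for_invariant_measure
    (R : ℤ) (hR : 1 < R) (p : ℤ → ℝ) (hp : ∀ k, 0 ≤ p k)
    (hrange : ∀ k : ℤ, R < |k| → p k = 0)
    (ν : Measure Config) (hν : IsProbabilityMeasure ν)
    (hinv : IsInvariantMeasure p ν) :
    ∀ x : ℤ, x ≠ -1 → x ≠ 0 →
      ∫ η, current p x (x + 1) η ∂ν = ∫ η, current p (-1) 1 η ∂ν := by
  haveI := hν
  -- integrability of every current
  have hintcur : ∀ i j : ℤ, Integrable (fun η => current p i j η) ν := by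
    intro i j
    have hfun : (fun η => current p i j η)
        = fun η => ∑ q ∈ Finset.Icc (j - R) i ×ˢ Finset.Icc j (i + R),
          (if q.1 ≤ i ∧ j ≤ q.2 ∧ q.1 ≠ 0 ∧ q.2 ≠ 0 then
            p (q.2 - q.1) * val η q.1 * (1 - val η q.2)
              - p (q.1 - q.2) * val η q.2 * (1 - val η q.1)
          else 0) := by
      refine funext fun η => current_tsum_eq R hR p hrange i j η _ fun q h1 h2 hd => ?_
      simp only [Finset.mem_product, Finset.mem_Icc]
      omega
    rw [hfun]
    refine integrable_finset_sum _ fun q _ => ?_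
    by_cases hc : q.1 ≤ i ∧ j ≤ q.2 ∧ q.1 ≠ 0 ∧ q.2 ≠ 0
    · simp only [if_pos hc]
      have hmeas : Measurable fun η : Config =>
          p (q.2 - q.1) * val η q.1 * (1 - val η q.2)
            - p (q.1 - q.2) * val η q.2 * (1 - val η q.1) :=
        ((((measurable_val q.1).const_mul _).mul
            (measurable_const.sub (measurable_val q.2))).sub
          (((measurable_val q.2).const_mul _).mul
            (measurable_const.sub (measurable_val q.1))))
      refine Integrable.mono' (integrable_const (|p (q.2 - q.1)| + |p (q.1 - q.2)|))
        hmeas.aestronglyMeasurable ?_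
      filter_upwards with η
      cases h1 : η q.1 <;> cases h2 : η q.2 <;>
        simp [val, h1, h2, Real.norm_eq_abs] <;>
        first
          | positivity
          | exact le_add_of_nonneg_right (abs_nonneg _)
          | exact le_add_of_nonneg_left (abs_nonneg _)
    · simp only [if_neg hc]
      exact integrable_const 0
  -- the pointwise identity C_{i,i+1} + L(η(i)) - C_{i-1,i} = 0
  have hpt : ∀ i : ℤ, i ≠ 0 → ∀ η : Config,
      current p i (i + 1) η + gen p (fun η => val η i) η
        - current p (i - 1) i η = 0 := by
    intro i hi η
    set B : Finset (ℤ × ℤ) := Finset.Icc (i - R) (i + R) ×ˢ Finset.Icc (i - R) (i + R)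
      with hBdef
    have hmem : ∀ q : ℤ × ℤ,
        (i - R ≤ q.1 ∧ q.1 ≤ i + R ∧ i - R ≤ q.2 ∧ q.2 ≤ i + R) → q ∈ B := by
      intro q h
      simp only [hBdef, Finset.mem_product, Finset.mem_Icc]
      omega
    rw [current_tsum_eq R hR p hrange i (i + 1) η B
        (fun q h1 h2 hd => hmem q (by omega)),
      current_tsum_eq R hR p hrange (i - 1) i η B
        (fun q h1 h2 hd => hmem q (by omega)),
      gen_tsum_eq R p hrange i η B
        (fun q hor hd => hmem q (by rcases abs_le.mp hd with ⟨hl, hr⟩; omega))]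
    rw [← Finset.sum_add_distrib, ← Finset.sum_sub_distrib]
    refine Finset.sum_involution (fun q _ => q.swap) ?_ ?_ (fun q hq => ?_)
      (fun q hq => Prod.swap_swap q)
    · intro q hq
      have := pair_cancel p i hi η q.1 q.2
      simpa using this
    · intro q hq hne heq
      apply hne
      have h2 := pair_cancel p i hi η q.1 q.2
      have h3 : q.2 = q.1 := congrArg Prod.fst heq
      rw [h3] at h2 ⊢
      linarith [h2]
    · simp only [hBdef, Finset.mem_product, Finset.mem_Icc, Prod.fst_swap,
        Prod.snd_swap] at hq ⊢
      tauto
  -- the integral step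
  have hstep : ∀ i : ℤ, i ≠ 0 →
      ∫ η, current p i (i + 1) η ∂ν = ∫ η, current p (i - 1) i η ∂ν := by
    intro i hi
    have hint1 := hintcur i (i + 1)
    have hint2 := hintcur (i - 1) i
    have hg : (fun η => gen p (fun η => val η i) η)
        = fun η => current p (i - 1) i η - current p i (i + 1) η :=
      funext fun η => by have := hpt i hi η; linarith
    have h0 : ∫ η, gen p (fun η => val η i) η ∂ν = 0 :=
      hinv _ ⟨{i}, fun η ζ h => by simp [val, h i (Finset.mem_singleton_self i)]⟩
    rw [hg, integral_sub hint2 hint1] at h0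
    linarith
  -- currents across the blockage coincide
  have e1 : ∫ η, current p 0 1 η ∂ν = ∫ η, current p (-1) 1 η ∂ν := by
    have : (fun η : Config => current p 0 1 η) = fun η => current p (-1) 1 η := by
      refine funext fun η => ?_
      simp only [current]
      exact tsum_congr fun q => if_congr (by omega) rfl rfl
    rw [this]
  have e2 : ∫ η, current p (-1) 0 η ∂ν = ∫ η, current p (-1) 1 η ∂ν := by
    have : (fun η : Config => current p (-1) 0 η) = fun η => current p (-1) 1 η := by
      refine funext fun η => ?_
      simp only [current]
      exact tsum_congr fun q => if_congr (by omega) rfl rfl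
    rw [this]
  -- chains of equalities
  have hpos : ∀ n : ℤ, 0 ≤ n →
      ∫ η, current p n (n + 1) η ∂ν = ∫ η, current p (-1) 1 η ∂ν := by
    refine Int.le_induction ?_ ?_
    · simpa using e1
    · intro n hn ih
      have h := hstep (n + 1) (by omega)
      rw [show n + 1 - 1 = n by ring] at h
      rw [h]
      exact ih
  have hneg : ∀ n : ℤ, n ≤ -1 →
      ∫ η, current p n (n + 1) η ∂ν = ∫ η, current p (-1) 1 η ∂ν := by
    refine Int.le_induction_down ?_ ?_
    · rw [show (-1 : ℤ) + 1 = 0 by norm_num]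
      exact e2
    · intro n hn ih
      have h := hstep n (by omega)
      rw [show n - 1 + 1 = n by ring, ← h]
      exact ih
  intro x hx1 hx0
  rcases le_or_gt 0 x with h | h
  · exact hpos x h
  · exact hneg x (by omega)
end

section
/- Let p : ℤ → ℝ satisfy p(k) ≥ 0 for all k and p(k) = 0 for |k| > R, where R > 1 is an integer. Let ν̄ be an invariant probability measure for the generator L of the ASEP on ℤ with a blockage at the origin, and let ν* be a Cesàro weak limit of ν̄ under translation, i.e. ν* = lim_{k→∞} (1/n_k) Σ_{i=1}^{n_k} τ_i ν̄ in the topology of weak convergence of probability measures, for some sequence of integers n_k → ∞. Then: (1) ν* is translation invariant, i.e. τ_1 ν* = ν*; and (2) ν* is invariant for the translation-invariant ASEP generator L_0, i.e. ∫ L_0 f dν* = 0 for every local function f. -/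
open MeasureTheory Filter
open scoped NNReal

/-- The translation `τ_i` on configurations: `(τ_i η)(j) = η (j + i)`. -/
def transl (i : ℤ) (η : Config) : Config := fun j => η (j + i)

/-- The translation `τ_i` on measures (pushforward). -/
noncomputable def translMeasure (i : ℤ) (ν : Measure Config) : Measure Config :=
  Measure.map (transl i) ν

/-- `ν'` is a Cesàro weak limit of `ν` under translation: for some sequence
`n_k → ∞`, the probability measures `(1/n_k) Σ_{i=1}^{n_k} τ_i ν` converge weakly
to `ν'`, i.e. the integrals of every (bounded) continuous function converge.  -/
def IsCesaroLimit (ν ν' : Measure Config) : Prop :=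
  ∃ n : ℕ → ℕ, Tendsto n atTop atTop ∧
    ∀ f : Config → ℝ, Continuous f →
      Tendsto (fun k => (n k : ℝ)⁻¹ * ∑ i ∈ Finset.Icc 1 (n k),
          ∫ η, f η ∂(translMeasure (i : ℤ) ν)) atTop
        (nhds (∫ η, f η ∂ν'))

/-- The generator of the translation-invariant ASEP (no blockage):
`L₀ f (η) = Σ_{x,y} p (y-x) η(x) (1-η(y)) (f(η^{x,y}) - f(η))`. -/
noncomputable def gen0 (p : ℤ → ℝ) (f : Config → ℝ) (η : Config) : ℝ :=
  ∑' q : ℤ × ℤ,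
    p (q.2 - q.1) * val η q.1 * (1 - val η q.2) * (f (swapConf η q.1 q.2) - f η)

/-! ### Auxiliary lemmas -/

section Aux

lemma transl_continuous (i : ℤ) : Continuous (transl i) := by
  apply continuous_pi; intro j; exact continuous_apply (j + i)

lemma transl_measurable (i : ℤ) : Measurable (transl i) :=
  (transl_continuous i).measurable

lemma IsLocal.continuous {f : Config → ℝ} (hf : IsLocal f) : Continuous f := by
  obtain ⟨s, hs⟩ := hf
  have hfac : f = (fun σ : (x : s) → Bool =>
      f fun x => if h : x ∈ s then σ ⟨x, h⟩ else false) ∘ (fun η (x : s) => η x) := by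
    funext η
    exact hs η _ (fun x hx => by simp [hx])
  rw [hfac]
  exact continuous_of_discreteTopology.comp (continuous_pi fun x => continuous_apply _)

lemma isLocal_transl {f : Config → ℝ} (hf : IsLocal f) (i : ℤ) :
    IsLocal (fun η => f (transl i η)) := by
  obtain ⟨s, hs⟩ := hf
  refine ⟨s.image (· + i), fun η ζ h => ?_⟩
  exact hs _ _ fun x hx => h (x + i) (Finset.mem_image_of_mem _ hx)

lemma integral_translMeasure (i : ℤ) (ν : Measure Config) {g : Config → ℝ}
    (hg : Continuous g) :
    ∫ η, g η ∂(translMeasure i ν) = ∫ η, g (transl i η) ∂ν := by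
  unfold translMeasure
  rw [integral_map (transl_measurable i).aemeasurable hg.aestronglyMeasurable]

/-- The set of sites within distance `R` of a site of `s`. -/
noncomputable def spread (R : ℤ) (s : Finset ℤ) : Finset ℤ :=
  (s ×ˢ Finset.Icc (-R) R).image fun q => q.1 + q.2

lemma mem_spread {R : ℤ} {s : Finset ℤ} {x : ℤ} (hx : x ∈ s)
    {d : ℤ} (hd : |d| ≤ R) : x + d ∈ spread R s := by
  refine Finset.mem_image.2 ⟨(x, d), ?_, rfl⟩
  rw [Finset.mem_product]
  exact ⟨hx, Finset.mem_Icc.2 ⟨neg_le_of_abs_le hd, le_of_abs_le hd⟩⟩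

lemma subset_spread {R : ℤ} (hR : 0 ≤ R) {s : Finset ℤ} {x : ℤ} (hx : x ∈ s) :
    x ∈ spread R s := by
  simpa using mem_spread hx (d := 0) (by simpa using hR)

/-- The summand of `gen0` vanishes outside `spread R s ×ˢ spread R s`. -/
lemma term_support {R : ℤ} {p : ℤ → ℝ} (hrange : ∀ k : ℤ, R < |k| → p k = 0)
    (hR : 0 ≤ R) {f : Config → ℝ} {s : Finset ℤ}
    (hs : ∀ η ζ : Config, (∀ x ∈ s, η x = ζ x) → f η = f ζ)
    (η : Config) {q : ℤ × ℤ} (hq : q ∉ (spread R s) ×ˢ (spread R s)) :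
    p (q.2 - q.1) * val η q.1 * (1 - val η q.2) * (f (swapConf η q.1 q.2) - f η) = 0 := by
  by_cases hp0 : p (q.2 - q.1) = 0
  · simp [hp0]
  have hd : |q.2 - q.1| ≤ R := by
    by_contra h
    exact hp0 (hrange _ (lt_of_not_ge h))
  by_cases h1 : q.1 ∈ s
  · exact absurd (Finset.mem_product.2 ⟨subset_spread hR h1,
      by simpa using mem_spread h1 hd⟩) hq
  by_cases h2 : q.2 ∈ s
  · exact absurd (Finset.mem_product.2
      ⟨by have := mem_spread h2 (abs_sub_comm q.2 q.1 ▸ hd)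
          rwa [show q.2 + (q.1 - q.2) = q.1 by ring] at this,
        subset_spread hR h2⟩) hq
  · have hfe : f (swapConf η q.1 q.2) = f η := by
      apply hs
      intro x hx
      have hx1 : x ≠ q.1 := fun h => h1 (h ▸ hx)
      have hx2 : x ≠ q.2 := fun h => h2 (h ▸ hx)
      simp [swapConf, hx1, hx2]
    simp [hfe]

lemma gen0_eq_sum {R : ℤ} {p : ℤ → ℝ} (hrange : ∀ k : ℤ, R < |k| → p k = 0)
    (hR : 0 ≤ R) {f : Config → ℝ} {s : Finset ℤ}
    (hs : ∀ η ζ : Config, (∀ x ∈ s, η x = ζ x) → f η = f ζ) (η : Config) :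
    gen0 p f η = ∑ q ∈ (spread R s) ×ˢ (spread R s),
      p (q.2 - q.1) * val η q.1 * (1 - val η q.2) * (f (swapConf η q.1 q.2) - f η) :=
  tsum_eq_sum fun _ hq => term_support hrange hR hs η hq

lemma gen0_isLocal {R : ℤ} {p : ℤ → ℝ} (hrange : ∀ k : ℤ, R < |k| → p k = 0)
    (hR : 0 ≤ R) {f : Config → ℝ} {s : Finset ℤ}
    (hs : ∀ η ζ : Config, (∀ x ∈ s, η x = ζ x) → f η = f ζ) :
    IsLocal (gen0 p f) := by
  refine ⟨spread R s, fun η ζ hηζ => ?_⟩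
  rw [gen0_eq_sum hrange hR hs η, gen0_eq_sum hrange hR hs ζ]
  apply Finset.sum_congr rfl
  intro q hq
  rw [Finset.mem_product] at hq
  have e1 : val η q.1 = val ζ q.1 := by rw [val, val, hηζ _ hq.1]
  have e2 : val η q.2 = val ζ q.2 := by rw [val, val, hηζ _ hq.2]
  have e3 : f η = f ζ := hs _ _ fun x hx => hηζ x (subset_spread hR hx)
  have e4 : f (swapConf η q.1 q.2) = f (swapConf ζ q.1 q.2) := by
    apply hs
    intro x hx
    simp only [swapConf]
    split_ifs
    · exact hηζ _ hq.2
    · exact hηζ _ hq.1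
    · exact hηζ _ (subset_spread hR hx)
  rw [e1, e2, e3, e4]

lemma transl_swapConf (i : ℤ) (η : Config) (x y : ℤ) :
    transl i (swapConf η (x + i) (y + i)) = swapConf (transl i η) x y := by
  funext j
  simp only [transl, swapConf, add_left_inj]

/-- The key identity: if the blockage site `-i` is far away from the (spread)
support of `f`, then the blocked generator applied to the translate of `f`
coincides with the free generator applied to `f` at the translated configuration. -/
lemma gen_transl_eq {R : ℤ} {p : ℤ → ℝ} (hrange : ∀ k : ℤ, R < |k| → p k = 0)
    (hR : 0 ≤ R) {f : Config → ℝ} {s : Finset ℤ}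
    (hs : ∀ η ζ : Config, (∀ x ∈ s, η x = ζ x) → f η = f ζ) (i : ℤ)
    (hi : -i ∉ spread R s) (η : Config) :
    gen p (fun ζ => f (transl i ζ)) η = gen0 p f (transl i η) := by
  unfold gen gen0
  rw [← Equiv.tsum_eq ((Equiv.addRight i).prodCongr (Equiv.addRight i))
    (fun q : ℤ × ℤ => if q.1 ≠ 0 ∧ q.2 ≠ 0 then
      p (q.2 - q.1) * val η q.1 * (1 - val η q.2) *
        ((fun ζ => f (transl i ζ)) (swapConf η q.1 q.2) - f (transl i η))
    else 0)]
  apply tsum_congr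
  intro q
  simp only [Equiv.prodCongr_apply, Equiv.coe_addRight, Prod.map_fst, Prod.map_snd]
  have hval : ∀ x : ℤ, val η (x + i) = val (transl i η) x := fun x => rfl
  by_cases hc : q.1 + i ≠ 0 ∧ q.2 + i ≠ 0
  · rw [if_pos hc, show q.2 + i - (q.1 + i) = q.2 - q.1 by ring, hval, hval, transl_swapConf]
  · rw [if_neg hc]
    refine (term_support hrange hR hs (transl i η) ?_).symm
    intro hmem
    rw [Finset.mem_product] at hmem
    rcases not_and_or.1 hc with h | h
    · rw [not_not] at h
      exact hi (by rw [show (-i : ℤ) = q.1 by omega]; exact hmem.1)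
    · rw [not_not] at h
      exact hi (by rw [show (-i : ℤ) = q.2 by omega]; exact hmem.2)

end Aux

/-- Any Cesàro weak limit under translation of an invariant measure of the
blocked ASEP is translation invariant and invariant for the translation-invariant
ASEP generator `L₀`. -/
theorem cesaro_limit_translation_invariant_and_L0_invariant
    (R : ℤ) (hR : 1 < R) (p : ℤ → ℝ) (hp : ∀ k, 0 ≤ p k)
    (hrange : ∀ k : ℤ, R < |k| → p k = 0)
    (ν νstar : Measure Config) (hν : IsProbabilityMeasure ν)
    (hνs : IsProbabilityMeasure νstar)
    (hinv : IsInvariantMeasure p ν) (hces : IsCesaroLimit ν νstar) :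
    translMeasure 1 νstar = νstar ∧
    ∀ f : Config → ℝ, IsLocal f → ∫ η, gen0 p f η ∂νstar = 0 := by
  have hR0 : (0 : ℤ) ≤ R := by omega
  obtain ⟨n, hn, hconv⟩ := hces
  have hprob : ∀ j : ℤ, IsProbabilityMeasure (translMeasure j ν) := fun j =>
    Measure.isProbabilityMeasure_map (transl_measurable j).aemeasurable
  have hinvtendsto : Tendsto (fun k => (n k : ℝ)⁻¹) atTop (nhds 0) :=
    tendsto_inv_atTop_zero.comp (tendsto_natCast_atTop_atTop.comp hn)
  constructor
  · -- Part 1: translation invariance of `νstar`.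
    have key : ∀ f : Config → ℝ, Continuous f →
        ∫ η, f η ∂(translMeasure 1 νstar) = ∫ η, f η ∂νstar := by
      intro f hf
      rw [integral_translMeasure 1 νstar hf]
      have hf1 : Continuous fun η => f (transl 1 η) := hf.comp (transl_continuous 1)
      obtain ⟨C, hC⟩ : ∃ C : ℝ, ∀ η, |f η| ≤ C := by
        refine ⟨‖BoundedContinuousFunction.mkOfCompact ⟨f, hf⟩‖, fun η => ?_⟩
        simpa using (BoundedContinuousFunction.mkOfCompact ⟨f, hf⟩).norm_coe_le_norm η
      have h1 := hconv _ hf1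
      have h2 := hconv _ hf
      set b : ℕ → ℝ := fun i => ∫ η, f η ∂(translMeasure (i : ℤ) ν) with hb
      have hbC : ∀ j : ℕ, |b j| ≤ C := by
        intro j
        have hpj := hprob (j : ℤ)
        rw [hb]
        simp only
        calc |∫ η, f η ∂(translMeasure (j : ℤ) ν)|
            = ‖∫ η, f η ∂(translMeasure (j : ℤ) ν)‖ := (Real.norm_eq_abs _).symm
          _ ≤ C * ((translMeasure (j : ℤ) ν) Set.univ).toReal := by
              refine norm_integral_le_of_norm_le_const (ae_of_all _ fun η => ?_)
              simpa using hC η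
          _ = C := by simp [measure_univ]
      have hshift : ∀ i : ℕ, (∫ η, f (transl 1 η) ∂(translMeasure (i : ℤ) ν)) = b (i + 1) := by
        intro i
        show _ = ∫ η, f η ∂(translMeasure ((i + 1 : ℕ) : ℤ) ν)
        rw [integral_translMeasure _ _ hf1, integral_translMeasure _ _ hf]
        refine integral_congr_ae (ae_of_all _ fun η => ?_)
        show f (transl 1 (transl (i : ℤ) η)) = f (transl ((i + 1 : ℕ) : ℤ) η)
        congr 1
        funext j
        show η (j + 1 + (i : ℤ)) = η (j + ((i + 1 : ℕ) : ℤ))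
        congr 1
        push_cast
        ring
      have hsum : ∀ m : ℕ, (∑ i ∈ Finset.Icc 1 m, b (i + 1)) + b 1
          = (∑ i ∈ Finset.Icc 1 m, b i) + b (m + 1) := by
        intro m
        induction m with
        | zero => simp
        | succ m ih =>
          rw [Finset.sum_Icc_succ_top (by omega : 1 ≤ m + 1),
              Finset.sum_Icc_succ_top (by omega : 1 ≤ m + 1)]
          linarith
      simp only [hshift] at h1
      have hd0 : Tendsto (fun k => (n k : ℝ)⁻¹ * (b (n k + 1) - b 1)) atTop (nhds 0) := by
        refine squeeze_zero_norm (fun k => ?_) (by simpa using hinvtendsto.mul_const (2 * C))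
        rw [norm_mul, Real.norm_eq_abs, Real.norm_eq_abs, abs_inv, Nat.abs_cast]
        refine mul_le_mul_of_nonneg_left ?_ (by positivity)
        calc |b (n k + 1) - b 1| ≤ |b (n k + 1)| + |b 1| := abs_sub _ _
          _ ≤ C + C := add_le_add (hbC _) (hbC _)
          _ = 2 * C := by ring
      have heq : (fun k => (n k : ℝ)⁻¹ * ∑ i ∈ Finset.Icc 1 (n k), b (i + 1))
          = fun k => (n k : ℝ)⁻¹ * ∑ i ∈ Finset.Icc 1 (n k), b i
            + (n k : ℝ)⁻¹ * (b (n k + 1) - b 1) := by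
        funext k
        have h := hsum (n k)
        have h' : (∑ i ∈ Finset.Icc 1 (n k), b (i + 1))
            = (∑ i ∈ Finset.Icc 1 (n k), b i) + (b (n k + 1) - b 1) := by linarith
        rw [h']
        ring
      rw [heq] at h1
      have := tendsto_nhds_unique h1 (h2.add hd0)
      simpa using this
    have hps : IsProbabilityMeasure (translMeasure 1 νstar) :=
      Measure.isProbabilityMeasure_map (transl_measurable 1).aemeasurable
    refine ext_of_forall_lintegral_eq_of_IsFiniteMeasure fun g => ?_
    have hg : Continuous fun η => (g η : ℝ) := NNReal.continuous_coe.comp g.continuous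
    have hfin1 := BoundedContinuousFunction.lintegral_lt_top_of_nnreal (translMeasure 1 νstar) g
    have hfin2 := BoundedContinuousFunction.lintegral_lt_top_of_nnreal νstar g
    have hkey := key _ hg
    rw [← BoundedContinuousFunction.toReal_lintegral_coe_eq_integral g (translMeasure 1 νstar),
        ← BoundedContinuousFunction.toReal_lintegral_coe_eq_integral g νstar] at hkey
    exact (ENNReal.toReal_eq_toReal_iff' hfin1.ne hfin2.ne).1 hkey
  · -- Part 2: invariance for the free generator.
    intro f hf
    obtain ⟨s, hs⟩ := hf
    have hcont : Continuous (gen0 p f) := (gen0_isLocal hrange hR0 hs).continuous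
    have hc := hconv _ hcont
    obtain ⟨N, hN⟩ : ∃ N : ℕ, ∀ i : ℕ, N ≤ i → (-(i : ℤ)) ∉ spread R s := by
      refine ⟨((spread R s).image fun a => (-a).toNat).sup id + 1, fun i hi hmem => ?_⟩
      have hmem' : i ∈ (spread R s).image fun a => (-a).toNat :=
        Finset.mem_image.2 ⟨-(i : ℤ), hmem, by simp⟩
      have := Finset.le_sup (f := id) hmem'
      simp only [id] at this
      omega
    have hzero : ∀ i : ℕ, N ≤ i → (∫ η, gen0 p f η ∂(translMeasure (i : ℤ) ν)) = 0 := by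
      intro i hi
      rw [integral_translMeasure _ _ hcont]
      have hfun : (fun η => gen0 p f (transl (i : ℤ) η))
          = gen p (fun ζ => f (transl (i : ℤ) ζ)) := by
        funext η
        exact (gen_transl_eq hrange hR0 hs _ (hN i hi) η).symm
      calc ∫ η, gen0 p f (transl (i : ℤ) η) ∂ν
          = ∫ η, gen p (fun ζ => f (transl (i : ℤ) ζ)) η ∂ν := by rw [hfun]
        _ = 0 := hinv _ (isLocal_transl ⟨s, hs⟩ _)
    set a : ℕ → ℝ := fun i => ∫ η, gen0 p f η ∂(translMeasure (i : ℤ) ν) with ha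
    set C : ℝ := ∑ i ∈ Finset.Icc 1 N, |a i| with hCdef
    have hbound : ∀ m : ℕ, |∑ i ∈ Finset.Icc 1 m, a i| ≤ C := by
      intro m
      calc |∑ i ∈ Finset.Icc 1 m, a i| ≤ ∑ i ∈ Finset.Icc 1 m, |a i| :=
            Finset.abs_sum_le_sum_abs _ _
        _ = ∑ i ∈ Finset.Icc 1 m ∩ Finset.Icc 1 N, |a i| := by
            refine (Finset.sum_subset Finset.inter_subset_left fun i hi hni => ?_).symm
            have h1 : 1 ≤ i := (Finset.mem_Icc.1 hi).1
            have hNi : N ≤ i := by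
              by_contra h
              exact hni (Finset.mem_inter.2 ⟨hi, Finset.mem_Icc.2 ⟨h1, by omega⟩⟩)
            simp only [ha]
            rw [hzero i hNi, abs_zero]
        _ ≤ C := Finset.sum_le_sum_of_subset_of_nonneg Finset.inter_subset_right
            (fun _ _ _ => abs_nonneg _)
    have hzlim : Tendsto (fun k => (n k : ℝ)⁻¹ * ∑ i ∈ Finset.Icc 1 (n k), a i) atTop
        (nhds 0) := by
      refine squeeze_zero_norm (fun k => ?_) (by simpa using hinvtendsto.mul_const C)
      rw [norm_mul, Real.norm_eq_abs, Real.norm_eq_abs, abs_inv, Nat.abs_cast]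
      exact mul_le_mul_of_nonneg_left (hbound _) (by positivity)
    exact tendsto_nhds_unique hc hzlim
end

section
/- Let R ≥ 1 be an integer and let q : ℤ → ℝ satisfy q(k) = 0 unless 1 ≤ k ≤ R. For any function a : ℤ → ℝ define G_i = Σ_{j=−(R−1)}^{R−1} ( Σ_{k=|j|+1}^{R} (k − |j|) q(k) ) a(i+j). Then for every integer i, Σ_{x ≤ i < y} q(y−x) (a(y) − a(x)) = G_{i+1} − G_i, where the sum on the left ranges over pairs of integers x ≤ i < y (it is finite since q vanishes outside {1,…,R}). -/
private lemma sum_Icc_reflect (g : ℤ → ℝ) (c a b : ℤ) :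
    ∑ x ∈ Finset.Icc a b, g (c - x) = ∑ k ∈ Finset.Icc (c - b) (c - a), g k := by
  refine Finset.sum_nbij' (fun x => c - x) (fun k => c - k) ?_ ?_ ?_ ?_ ?_ <;>
    simp only [Finset.mem_Icc] <;> intros <;> first | omega | trivial

private lemma abs_fact (j : ℤ) : |j| = j ∨ |j| = -j := abs_choice j

/-- Telescoping identity: for jump rates `q` supported in `{1,…,R}` and any
function `a : ℤ → ℝ`, setting
`G_i = Σ_{j=-(R-1)}^{R-1} (Σ_{k=|j|+1}^{R} (k-|j|) q(k)) a(i+j)`,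
one has `Σ_{x ≤ i < y} q(y-x) (a(y) - a(x)) = G_{i+1} - G_i`. -/
theorem current_telescoping
    (R : ℤ) (hR : 1 ≤ R) (q : ℤ → ℝ)
    (hq : ∀ k : ℤ, ¬(1 ≤ k ∧ k ≤ R) → q k = 0)
    (a : ℤ → ℝ) (G : ℤ → ℝ)
    (hG : ∀ i : ℤ, G i = ∑ j ∈ Finset.Icc (-(R - 1)) (R - 1),
      (∑ k ∈ Finset.Icc (|j| + 1) R, ((k - |j| : ℤ) : ℝ) * q k) * a (i + j))
    (i : ℤ) :
    (∑' xy : ℤ × ℤ,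
        if xy.1 ≤ i ∧ i < xy.2 then q (xy.2 - xy.1) * (a xy.2 - a xy.1) else 0)
      = G (i + 1) - G i := by
  classical
  have hqz : ∀ k : ℤ, R < k → q k = 0 := fun k hk => hq k (by omega)
  set X := Finset.Icc (i - R + 1) i with hX
  set Y := Finset.Icc (i + 1) (i + R) with hY
  set f : ℤ × ℤ → ℝ := fun xy =>
    if xy.1 ≤ i ∧ i < xy.2 then q (xy.2 - xy.1) * (a xy.2 - a xy.1) else 0 with hf
  have hsupp : ∀ xy ∉ X ×ˢ Y, f xy = 0 := by
    rintro ⟨x, y⟩ hxy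
    simp only [Finset.mem_product, Finset.mem_Icc, hX, hY, not_and_or] at hxy
    by_cases h : x ≤ i ∧ i < y
    · have hz : q (y - x) = 0 := hq _ (by omega)
      simp [hf, h, hz]
    · simp [hf, h]
  have h1 : (∑' xy : ℤ × ℤ, f xy) = ∑ xy ∈ X ×ˢ Y, f xy := tsum_eq_sum hsupp
  rw [show (∑' xy : ℤ × ℤ,
        if xy.1 ≤ i ∧ i < xy.2 then q (xy.2 - xy.1) * (a xy.2 - a xy.1) else 0)
      = ∑' xy : ℤ × ℤ, f xy from rfl, h1, Finset.sum_product]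
  have h2 : ∀ x ∈ X, ∀ y ∈ Y, f (x, y) = q (y - x) * (a y - a x) := by
    intro x hx y hy
    simp only [hX, hY, Finset.mem_Icc] at hx hy
    simp [hf, show x ≤ i ∧ i < y by omega]
  rw [Finset.sum_congr rfl (fun x hx => Finset.sum_congr rfl (fun y hy => h2 x hx y hy))]
  -- finite identity
  set S : ℤ → ℝ := fun m => ∑ k ∈ Finset.Icc m R, q k with hSdef
  set c : ℤ → ℝ := fun j => ∑ k ∈ Finset.Icc (|j| + 1) R, ((k - |j| : ℤ) : ℝ) * q k with hcdef
  have hSext : ∀ m n : ℤ, R ≤ n → (∑ k ∈ Finset.Icc m n, q k) = S m := by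
    intro m n hn
    refine (Finset.sum_subset (Finset.Icc_subset_Icc_right hn) ?_).symm
    intro k hk hk'
    simp only [Finset.mem_Icc] at hk hk'
    exact hqz k (by omega)
  have hS0 : ∀ m : ℤ, R < m → S m = 0 := by
    intro m hm
    refine Finset.sum_eq_zero fun k hk => ?_
    simp only [Finset.mem_Icc] at hk
    exact hqz k (by omega)
  have hc0 : ∀ j : ℤ, R ≤ |j| → c j = 0 := by
    intro j hj
    have he : Finset.Icc (|j| + 1) R = ∅ := Finset.Icc_eq_empty (by omega)
    simp only [hcdef, he, Finset.sum_empty]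
  set T := Finset.Icc (-R) (R + 1) with hT
  set d : ℤ → ℝ := fun j => if 1 ≤ j then S j else -S (1 - j) with hd
  have hLHS : (∑ x ∈ X, ∑ y ∈ Y, q (y - x) * (a y - a x))
      = ∑ j ∈ T, d j * a (i + j) := by
    have split : ∀ x ∈ X, ∀ y ∈ Y, q (y - x) * (a y - a x)
        = q (y - x) * a y - q (y - x) * a x := fun _ _ _ _ => by ring
    rw [Finset.sum_congr rfl fun x hx => Finset.sum_congr rfl fun y hy => split x hx y hy]
    simp only [Finset.sum_sub_distrib]
    rw [Finset.sum_comm (s := X) (t := Y)]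
    have hA : (∑ y ∈ Y, ∑ x ∈ X, q (y - x) * a y)
        = ∑ j ∈ Finset.Icc 1 R, S j * a (i + j) := by
      have step : ∀ y ∈ Y, ∑ x ∈ X, q (y - x) * a y = S (y - i) * a y := by
        intro y hy
        simp only [hY, Finset.mem_Icc] at hy
        rw [← Finset.sum_mul, hX, sum_Icc_reflect q y (i - R + 1) i,
          hSext (y - i) (y - (i - R + 1)) (by omega)]
      rw [Finset.sum_congr rfl step, hY]
      refine Finset.sum_nbij' (fun y => y - i) (fun j => i + j) ?_ ?_ ?_ ?_ ?_
      · simp only [Finset.mem_Icc]; intros; omega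
      · simp only [Finset.mem_Icc]; intros; omega
      · intros; omega
      · intros; omega
      · intro y hy
        rw [show i + (y - i) = y from by omega]
    have hB : (∑ x ∈ X, ∑ y ∈ Y, q (y - x) * a x)
        = ∑ j ∈ Finset.Icc (1 - R) 0, S (1 - j) * a (i + j) := by
      have step : ∀ x ∈ X, ∑ y ∈ Y, q (y - x) * a x = S (i + 1 - x) * a x := by
        intro x hx
        simp only [hX, Finset.mem_Icc] at hx
        have key : ∑ y ∈ Y, q (y - x) = S (i + 1 - x) := by
          have e1 : ∑ y ∈ Y, q (y - x) = ∑ y ∈ Y, (fun t => q (-t)) (x - y) := by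
            refine Finset.sum_congr rfl fun y _ => ?_
            simp only; congr 1; omega
          rw [e1, hY, sum_Icc_reflect (fun t => q (-t)) x (i + 1) (i + R)]
          have e2 : ∑ k ∈ Finset.Icc (x - (i + R)) (x - (i + 1)), q (-k)
              = ∑ k ∈ Finset.Icc (i + 1 - x) (i + R - x), q k := by
            refine Finset.sum_nbij' (fun k => -k) (fun k => -k) ?_ ?_ ?_ ?_ ?_
            · simp only [Finset.mem_Icc]; intros; omega
            · simp only [Finset.mem_Icc]; intros; omega
            · intros; omega
            · intros; omega
            · intro k hk
              dsimp only
          rw [e2, hSext (i + 1 - x) (i + R - x) (by omega)]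
        rw [← Finset.sum_mul, key]
      rw [Finset.sum_congr rfl step, hX]
      refine Finset.sum_nbij' (fun x => x - i) (fun j => i + j) ?_ ?_ ?_ ?_ ?_
      · simp only [Finset.mem_Icc]; intros; omega
      · simp only [Finset.mem_Icc]; intros; omega
      · intros; omega
      · intros; omega
      · intro x hx
        rw [show i + (x - i) = x from by omega, show (1:ℤ) - (x - i) = i + 1 - x from by omega]
    rw [hA, hB]
    have hT_split : T = Finset.Icc (-R) 0 ∪ Finset.Icc 1 (R + 1) := by
      rw [hT]; ext t; simp only [Finset.mem_union, Finset.mem_Icc]; omega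
    have hdisj : Disjoint (Finset.Icc (-R) (0:ℤ)) (Finset.Icc 1 (R + 1)) := by
      rw [Finset.disjoint_left]; intro t ht ht'
      simp only [Finset.mem_Icc] at ht ht'; omega
    rw [hT_split, Finset.sum_union hdisj]
    have hpos : ∑ j ∈ Finset.Icc (1:ℤ) (R + 1), d j * a (i + j)
        = ∑ j ∈ Finset.Icc (1:ℤ) R, S j * a (i + j) := by
      rw [← Finset.sum_subset (Finset.Icc_subset_Icc_right (by omega : R ≤ R + 1)) ?_]
      · refine Finset.sum_congr rfl fun j hj => ?_
        simp only [Finset.mem_Icc] at hj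
        simp [hd, hj.1]
      · intro j hj hj'
        simp only [Finset.mem_Icc] at hj hj'
        have hjR : j = R + 1 := by omega
        subst hjR
        rw [hd]; dsimp only
        rw [if_pos (by omega : (1:ℤ) ≤ R + 1), hS0 (R + 1) (by omega), zero_mul]
    have hneg : ∑ j ∈ Finset.Icc (-R) (0:ℤ), d j * a (i + j)
        = -∑ j ∈ Finset.Icc (1 - R) (0:ℤ), S (1 - j) * a (i + j) := by
      rw [← Finset.sum_neg_distrib]
      rw [← Finset.sum_subset (Finset.Icc_subset_Icc_left (by omega : -R ≤ 1 - R)) ?_]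
      · refine Finset.sum_congr rfl fun j hj => ?_
        simp only [Finset.mem_Icc] at hj
        rw [hd]
        simp only [if_neg (by omega : ¬ (1:ℤ) ≤ j)]
        ring
      · intro j hj hj'
        simp only [Finset.mem_Icc] at hj hj'
        have hjR : j = -R := by omega
        subst hjR
        rw [hd]; dsimp only
        rw [if_neg (by omega : ¬ (1:ℤ) ≤ -R), hS0 (1 - -R) (by omega), neg_zero, zero_mul]
    rw [hpos, hneg]; ring
  rw [hLHS]
  -- RHS as a sum over T
  have hGi : ∀ m : ℤ, G m = ∑ j ∈ Finset.Icc (-R) R, c j * a (m + j) := by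
    intro m
    rw [hG m]
    refine Finset.sum_subset (Finset.Icc_subset_Icc (by omega) (by omega)) ?_
    intro j hj hj'
    simp only [Finset.mem_Icc] at hj hj'
    have habs : R ≤ |j| := by
      have h0 := abs_nonneg j
      rcases abs_fact j with h | h <;> omega
    rw [show (∑ k ∈ Finset.Icc (|j| + 1) R, ((k - |j| : ℤ) : ℝ) * q k) = c j from rfl,
      hc0 j habs, zero_mul]
  have hRHS : G (i + 1) - G i = ∑ j ∈ T, (c (j - 1) - c j) * a (i + j) := by
    rw [hGi (i + 1), hGi i]
    have e1 : ∑ j ∈ Finset.Icc (-R) R, c j * a (i + 1 + j)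
        = ∑ j ∈ Finset.Icc (-R + 1) (R + 1), c (j - 1) * a (i + j) := by
      refine Finset.sum_nbij' (fun j => j + 1) (fun j => j - 1) ?_ ?_ ?_ ?_ ?_
      · simp only [Finset.mem_Icc]; intros; omega
      · simp only [Finset.mem_Icc]; intros; omega
      · intros; omega
      · intros; omega
      · intro j hj
        rw [show j + 1 - 1 = j from by omega, show i + (j + 1) = i + 1 + j from by omega]
    rw [e1]
    have e2 : ∑ j ∈ Finset.Icc (-R + 1) (R + 1), c (j - 1) * a (i + j)
        = ∑ j ∈ T, c (j - 1) * a (i + j) := by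
      rw [hT]
      refine Finset.sum_subset (Finset.Icc_subset_Icc_left (by omega)) ?_
      intro j hj hj'
      simp only [Finset.mem_Icc] at hj hj'
      have hjR : j = -R := by omega
      rw [hjR, hc0 (-R - 1) (by have h0 := abs_nonneg (-R - 1); rcases abs_fact (-R - 1) with h | h <;> omega), zero_mul]
    have e3 : ∑ j ∈ Finset.Icc (-R) R, c j * a (i + j)
        = ∑ j ∈ T, c j * a (i + j) := by
      rw [hT]
      refine Finset.sum_subset (Finset.Icc_subset_Icc_right (by omega)) ?_
      intro j hj hj'
      simp only [Finset.mem_Icc] at hj hj'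
      have hjR : j = R + 1 := by omega
      rw [hjR, hc0 (R + 1) (by have h0 := abs_nonneg (R + 1); rcases abs_fact (R + 1) with h | h <;> omega), zero_mul]
    rw [e2, e3, ← Finset.sum_sub_distrib]
    refine Finset.sum_congr rfl fun j _ => ?_
    ring
  rw [hRHS]
  refine Finset.sum_congr rfl fun j hj => ?_
  simp only [hT, Finset.mem_Icc] at hj
  -- show d j = c (j-1) - c j
  have goal_coeff : d j = c (j - 1) - c j := by
    by_cases hj1 : 1 ≤ j
    · have ha1 : |j - 1| = j - 1 := abs_of_nonneg (by omega)
      have ha2 : |j| = j := abs_of_nonneg (by omega)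
      simp only [hd, hcdef, hSdef, if_pos hj1, ha1, ha2]
      have ext : ∑ k ∈ Finset.Icc (j + 1) R, ((k - j : ℤ) : ℝ) * q k
          = ∑ k ∈ Finset.Icc ((j - 1) + 1) R, ((k - j : ℤ) : ℝ) * q k := by
        refine Finset.sum_subset (Finset.Icc_subset_Icc_left (by omega)) ?_
        intro k hk hk'
        simp only [Finset.mem_Icc] at hk hk'
        have : k = j := by omega
        rw [this]; simp
      rw [ext, ← Finset.sum_sub_distrib]
      refine Finset.sum_congr (by congr 1; omega) fun k hk => ?_
      simp only [Finset.mem_Icc] at hk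
      push_cast
      ring
    · have ha1 : |j - 1| = -(j - 1) := abs_of_nonpos (by omega)
      have ha2 : |j| = -j := abs_of_nonpos (by omega)
      simp only [hd, hcdef, hSdef, if_neg hj1, ha1, ha2]
      have ext : ∑ k ∈ Finset.Icc (-(j - 1) + 1) R, ((k - -(j - 1) : ℤ) : ℝ) * q k
          = ∑ k ∈ Finset.Icc (-j + 1) R, ((k - -(j - 1) : ℤ) : ℝ) * q k := by
        refine Finset.sum_subset (Finset.Icc_subset_Icc_left (by omega)) ?_
        intro k hk hk'
        simp only [Finset.mem_Icc] at hk hk'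
        have hkj : k = -j + 1 := by omega
        rw [hkj, show (-j + 1 - -(j - 1)) = (0:ℤ) from by ring]
        simp
      rw [ext, ← Finset.sum_sub_distrib, ← Finset.sum_neg_distrib]
      refine Finset.sum_congr (by congr 1; omega) fun k hk => ?_
      simp only [Finset.mem_Icc] at hk
      push_cast
      ring
  rw [goal_coeff]
end

section
/- Let r ≥ 0 be an integer, let c_j > 0 for all integers j with |j| ≤ r, let a : ℤ → ℝ satisfy 0 ≤ a(x) ≤ 1 for all x, and define G_i = Σ_{|j| ≤ r} c_j a(i+j). Assume: (i) G_{i+1} ≥ G_i for all i ≥ I₀, for some integer I₀; and (ii) there is a sequence of integers n_k → ∞ such that for every x ∈ ℤ, (1/n_k) Σ_{i=1}^{n_k} a(x+i) → 0 as k → ∞. Then a(x) = 0 for every x ≥ I₀ − r. -/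
open Filter

/-- If `G_i = Σ_{|j| ≤ r} c_j a(i+j)` (with `c_j > 0` and `0 ≤ a ≤ 1`) is
nondecreasing for `i ≥ I₀`, and the Cesàro averages
`(1/n_k) Σ_{i=1}^{n_k} a(x+i)` tend to `0` along some sequence `n_k → ∞`
for every `x`, then `a(x) = 0` for every `x ≥ I₀ - r`. -/
theorem nonneg_increasing_with_zero_cesaro_vanishes
    (r : ℕ) (c : ℤ → ℝ) (hc : ∀ j : ℤ, |j| ≤ (r : ℤ) → 0 < c j)
    (a : ℤ → ℝ) (ha0 : ∀ x, 0 ≤ a x) (ha1 : ∀ x, a x ≤ 1)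
    (G : ℤ → ℝ)
    (hG : ∀ i : ℤ, G i = ∑ j ∈ Finset.Icc (-(r : ℤ)) (r : ℤ), c j * a (i + j))
    (I₀ : ℤ) (hmono : ∀ i : ℤ, I₀ ≤ i → G i ≤ G (i + 1))
    (n : ℕ → ℕ) (hn : Tendsto n atTop atTop)
    (hces : ∀ x : ℤ,
      Tendsto (fun k => (n k : ℝ)⁻¹ * ∑ i ∈ Finset.Icc 1 (n k), a (x + i))
        atTop (nhds 0)) :
    ∀ x : ℤ, I₀ - r ≤ x → a x = 0 := by
  intro x hx
  set i : ℤ := x + r with hi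
  have hiI : I₀ ≤ i := by omega
  -- monotonicity beyond i
  have hmono' : ∀ m : ℕ, G i ≤ G (i + m) := by
    intro m
    induction m with
    | zero => simp
    | succ m ih =>
      have h1 : G (i + m) ≤ G (i + m + 1) := hmono _ (by omega)
      have h2 : i + ((m : ℤ) + 1) = i + m + 1 := by ring
      push_cast
      rw [h2]
      linarith
  -- Cesàro averages of G at i tend to 0
  have hG0 : Tendsto (fun k => (n k : ℝ)⁻¹ * ∑ m ∈ Finset.Icc 1 (n k), G (i + m))
      atTop (nhds 0) := by
    have h1 : ∀ k, (n k : ℝ)⁻¹ * ∑ m ∈ Finset.Icc 1 (n k), G (i + m)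
        = ∑ j ∈ Finset.Icc (-(r : ℤ)) (r : ℤ),
            c j * ((n k : ℝ)⁻¹ * ∑ m ∈ Finset.Icc 1 (n k), a (i + j + m)) := by
      intro k
      simp only [hG, Finset.mul_sum]
      rw [Finset.sum_comm]
      refine Finset.sum_congr rfl fun j _ => Finset.sum_congr rfl fun m _ => ?_
      have : i + (m : ℤ) + j = i + j + m := by ring
      rw [this]; ring
    simp only [h1]
    have := tendsto_finset_sum (Finset.Icc (-(r : ℤ)) (r : ℤ))
      (fun j _ => (hces (i + j)).const_mul (c j))
    simpa using this
  -- G i ≤ 0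
  have hle : G i ≤ 0 := by
    refine ge_of_tendsto hG0 ?_
    filter_upwards [hn.eventually_ge_atTop 1] with k hk
    have hpos : (0 : ℝ) < n k := by exact_mod_cast hk
    have hsum : (n k : ℝ) * G i ≤ ∑ m ∈ Finset.Icc 1 (n k), G (i + m) := by
      have := Finset.card_nsmul_le_sum (Finset.Icc 1 (n k))
        (fun m => G (i + m)) (G i) (fun m _ => hmono' m)
      simpa [Nat.card_Icc, nsmul_eq_mul] using this
    rw [le_inv_mul_iff₀ hpos]
    exact hsum
  -- extract the term a x from G i
  have hmem : (-(r : ℤ)) ∈ Finset.Icc (-(r : ℤ)) (r : ℤ) := by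
    simp
  have hterm : c (-(r : ℤ)) * a (i + (-(r : ℤ))) ≤ G i := by
    rw [hG]
    refine Finset.single_le_sum (f := fun j => c j * a (i + j)) (fun j hj => ?_) hmem
    have hj' : |j| ≤ (r : ℤ) := by
      rw [Finset.mem_Icc] at hj; rw [abs_le]; exact hj
    exact mul_nonneg (hc j hj').le (ha0 _)
  have hix : i + (-(r : ℤ)) = x := by omega
  rw [hix] at hterm
  have hcp : 0 < c (-(r : ℤ)) := hc _ (by simp)
  nlinarith [ha0 x]
end

section
/- Let X and Y be particle configurations (strictly increasing functions ℤ → ℤ) with X ≥ Y pointwise. Let i ∈ ℤ and let z > 0 be an integer such that Y_i + z is not in the range of Y. Then there exists an integer z' ≥ 0 such that (a) either z' = 0, or X_i + z' is not in the range of X and X_i + z' ≤ Y_i + z, and (b) T_{i,z'} X ≥ T_{i,z} Y pointwise. -/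
/-- The index `I = max {k : X_k < X_i + z}` of the right-most particle to the
left of the target site `X_i + z`. -/
noncomputable def jumpIndex (X : ℤ → ℤ) (i z : ℤ) : ℤ :=
  sSup {k : ℤ | X k < X i + z}

/-- The jump-and-relabel map `T_{i,z}`: the `i`-th particle jumps to the site
`X_i + z` and the particles are relabelled so as to stay ordered; by convention
`T_{i,0} X = X`. -/
noncomputable def jumpRelabel (X : ℤ → ℤ) (i z : ℤ) : ℤ → ℤ :=
  if z = 0 then X
  else fun j =>
    if j < i ∨ jumpIndex X i z < j then X j
    else if j < jumpIndex X i z then X (j + 1)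
    else X i + z

lemma smono_gap {W : ℤ → ℤ} (hW : StrictMono W) {a b : ℤ} (h : a ≤ b) :
    W a + (b - a) ≤ W b :=
  Int.le_induction (motive := fun n _ => W a + (n - a) ≤ W n) (by omega)
    (fun n _ ih => by have := hW (lt_add_one n); omega) b h

lemma bddAbove_lt_set {W : ℤ → ℤ} (hW : StrictMono W) (b : ℤ) :
    BddAbove {k : ℤ | W k < b} := by
  refine ⟨max 0 (b - W 0), fun k hk => ?_⟩
  rcases le_or_gt k 0 with h | h
  · exact le_trans h (le_max_left _ _)
  · have := smono_gap hW h.le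
    simp only [Set.mem_setOf_eq] at hk
    have : k ≤ b - W 0 := by omega
    exact le_trans this (le_max_right _ _)

lemma jr_eq_zero (X : ℤ → ℤ) (i j : ℤ) : jumpRelabel X i 0 j = X j := by
  simp [jumpRelabel]

lemma jr_eq_self (X : ℤ → ℤ) {i z : ℤ} (hz : z ≠ 0) {j : ℤ}
    (h : j < i ∨ jumpIndex X i z < j) : jumpRelabel X i z j = X j := by
  simp only [jumpRelabel, if_neg hz]
  rw [if_pos h]

lemma jr_eq_shift (X : ℤ → ℤ) {i z : ℤ} (hz : z ≠ 0) {j : ℤ}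
    (h1 : i ≤ j) (h2 : j < jumpIndex X i z) : jumpRelabel X i z j = X (j + 1) := by
  simp only [jumpRelabel, if_neg hz]
  rw [if_neg (by omega), if_pos h2]

lemma jr_eq_target (X : ℤ → ℤ) {i z : ℤ} (hz : z ≠ 0)
    (h1 : i ≤ jumpIndex X i z) :
    jumpRelabel X i z (jumpIndex X i z) = X i + z := by
  simp only [jumpRelabel, if_neg hz]
  rw [if_neg (by omega), if_neg (by omega)]

/-- Main auxiliary lemma: given a valid target site `t` for the `X`-particle,
the order is preserved. -/
lemma coupling_aux (X Y : ℤ → ℤ) (hX : StrictMono X) (hY : StrictMono Y)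
    (hXY : ∀ k, Y k ≤ X k) (i z : ℤ) (hz : 0 < z)
    (hempty : Y i + z ∉ Set.range Y) (t : ℤ)
    (ht1 : X i ≤ t) (ht2 : t = X i ∨ (t ∉ Set.range X ∧ t ≤ Y i + z))
    (ht3 : ∀ s, t < s → s ≤ Y i + z → s ∈ Set.range X) :
    ∀ j, jumpRelabel Y i z j ≤ jumpRelabel X i (t - X i) j := by
  have hYib : Y i < Y i + z := by omega
  -- facts about IY := jumpIndex Y i z
  have hIYmem : Y (jumpIndex Y i z) < Y i + z :=
    Int.csSup_mem (s := {k : ℤ | Y k < Y i + z}) ⟨i, hYib⟩ (bddAbove_lt_set hY _)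
  have hIYle : ∀ k, Y k < Y i + z → k ≤ jumpIndex Y i z := fun k hk =>
    le_csSup (bddAbove_lt_set hY _) (show k ∈ {k : ℤ | Y k < Y i + z} from hk)
  have hiIY : i ≤ jumpIndex Y i z := hIYle i hYib
  have hIYsucc : ∀ k, jumpIndex Y i z < k → Y i + z < Y k := by
    intro k hk
    rcases lt_trichotomy (Y k) (Y i + z) with h | h | h
    · exact absurd (hIYle k h) (by omega)
    · exact absurd ⟨k, h⟩ hempty
    · exact h
  -- packed block lemma
  have hF : ∀ k m : ℤ, t ≤ X k → k ≤ m → X m ≤ Y i + z → X m - X k ≤ m - k := by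
    intro k m htk hkm
    refine Int.le_induction (motive := fun n _ => X n ≤ Y i + z → X n - X k ≤ n - k)
      (fun _ => by omega) ?_ m hkm
    intro n hn ih hb1
    have h1 : X n < X (n + 1) := hX (lt_add_one n)
    have h2 : X n ≤ Y i + z := by omega
    have h3 : X k ≤ X n := hX.monotone hn
    obtain ⟨k', hk'⟩ := ht3 (X n + 1) (by omega) (by omega)
    have hk'n : n < k' := by
      have := hX.lt_iff_lt (a := n) (b := k'); omega
    have : X (n + 1) ≤ X k' := hX.monotone (by omega)
    have := ih h2
    omega
  -- avoidance lemma
  have hH : ∀ k, t ≤ X k → X k < Y i + z → Y k < X k := by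
    intro k htk hkb
    rcases lt_or_ge (Y k) (X k) with h | h
    · exact h
    · exfalso
      have hYk : Y k = X k := le_antisymm (hXY k) h
      obtain ⟨m, hm⟩ := ht3 (Y i + z) (by omega) le_rfl
      have hkm : k < m := by have := hX.lt_iff_lt (a := k) (b := m); omega
      have h1 := hF k m htk hkm.le (by omega)
      have h2 := smono_gap hY hkm.le
      have h3 := hXY m
      exact hempty ⟨m, by omega⟩
  -- successor-site lemma
  have hK : ∀ k, t ≤ X k → X k < Y i + z → X (k + 1) = X k + 1 := by
    intro k htk hkb
    obtain ⟨k', hk'⟩ := ht3 (X k + 1) (by omega) (by omega)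
    have hkk' : k < k' := by have := hX.lt_iff_lt (a := k) (b := k'); omega
    have h1 : X (k + 1) ≤ X k' := hX.monotone (by omega)
    have h2 : X k < X (k + 1) := hX (lt_add_one k)
    omega
  -- if the next Y-particle is beyond the target, X k is already beyond it
  have hL : ∀ k, t ≤ X k → Y i + z < Y (k + 1) → Y i + z ≤ X k := by
    intro k htk hbk
    by_contra h
    push_neg at h
    have := hK k htk h
    have := hXY (k + 1)
    omega
  -- the next Y-particle fits below X k
  have hM : ∀ k, t ≤ X k → Y (k + 1) < Y i + z → Y (k + 1) ≤ X k := by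
    intro k htk hkb
    rcases le_or_gt (Y i + z) (X k) with h | h
    · omega
    · have h1 := hK k htk h
      rcases eq_or_lt_of_le (show X (k + 1) ≤ Y i + z by omega) with h2 | h2
      · omega
      · have := hH (k + 1) (by omega) h2
        omega
  rcases eq_or_lt_of_le ht1 with hti | hti
  · -- t = X i, z' = 0
    intro j
    rw [show t - X i = 0 by omega, jr_eq_zero]
    rcases lt_or_ge j i with hji | hji
    · rw [jr_eq_self Y hz.ne' (Or.inl hji)]; exact hXY j
    rcases lt_trichotomy j (jumpIndex Y i z) with hjIY | hjIY | hjIY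
    · rw [jr_eq_shift Y hz.ne' hji hjIY]
      have h3 : t ≤ X j := by have := hX.monotone hji; omega
      refine hM j h3 ?_
      have : Y (j + 1) ≤ Y (jumpIndex Y i z) := hY.monotone (by omega)
      omega
    · rw [hjIY, jr_eq_target Y hz.ne' hiIY]
      have h3 : t ≤ X (jumpIndex Y i z) := by have := hX.monotone hiIY; omega
      exact hL _ h3 (hIYsucc _ (lt_add_one _))
    · rw [jr_eq_self Y hz.ne' (Or.inr hjIY)]; exact hXY j
  · -- t > X i, z' = t - X i > 0
    have hz' : t - X i ≠ 0 := by omega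
    have htX : t ∉ Set.range X := by
      rcases ht2 with h | h
      · omega
      · exact h.1
    have htb : t ≤ Y i + z := by
      rcases ht2 with h | h
      · omega
      · exact h.2
    have hteq : X i + (t - X i) = t := by ring
    have hSX : {k : ℤ | X k < X i + (t - X i)} = {k : ℤ | X k < t} := by
      rw [hteq]
    have hI'mem : X (jumpIndex X i (t - X i)) < t := by
      have := Int.csSup_mem (s := {k : ℤ | X k < t}) ⟨i, hti⟩ (bddAbove_lt_set hX t)
      rw [jumpIndex, hSX]; exact this
    have hI'le : ∀ k, X k < t → k ≤ jumpIndex X i (t - X i) := fun k hk => by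
      have := le_csSup (bddAbove_lt_set hX t) (show k ∈ {k : ℤ | X k < t} from hk)
      rw [jumpIndex, hSX]; exact this
    have hiI' : i ≤ jumpIndex X i (t - X i) := hI'le i hti
    have hI'gt : ∀ k, jumpIndex X i (t - X i) < k → t < X k := by
      intro k hk
      rcases lt_trichotomy (X k) t with h | h | h
      · exact absurd (hI'le k h) (by omega)
      · exact absurd ⟨k, h⟩ htX
      · exact h
    have hI'IY : jumpIndex X i (t - X i) ≤ jumpIndex Y i z := by
      refine hIYle _ ?_
      have := hXY (jumpIndex X i (t - X i))
      omega
    -- the Y-particle following I' fits below the target t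
    have hN : Y (jumpIndex X i (t - X i) + 1) < Y i + z →
        Y (jumpIndex X i (t - X i) + 1) ≤ t := by
      intro hYI'
      by_contra hcon
      push_neg at hcon
      rcases eq_or_lt_of_le htb with h | h
      · omega
      · obtain ⟨k', hk'⟩ := ht3 (t + 1) (by omega) (by omega)
        have hk'I : jumpIndex X i (t - X i) < k' := by
          have := hI'gt k'
          rcases le_or_gt k' (jumpIndex X i (t - X i)) with hh | hh
          · have := hX.monotone hh; omega
          · exact hh
        have h2 : X (jumpIndex X i (t - X i) + 1) ≤ X k' := hX.monotone (by omega)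
        have h3 := hXY (jumpIndex X i (t - X i) + 1)
        have h4 : X (jumpIndex X i (t - X i) + 1) = t + 1 := by omega
        rcases eq_or_lt_of_le (show X (jumpIndex X i (t - X i) + 1) ≤ Y i + z by omega)
          with h5 | h5
        · omega
        · have := hH (jumpIndex X i (t - X i) + 1) (by omega) h5
          omega
    intro j
    rcases lt_or_ge j i with hji | hji
    · rw [jr_eq_self Y hz.ne' (Or.inl hji), jr_eq_self X hz' (Or.inl hji)]
      exact hXY j
    rcases lt_trichotomy j (jumpIndex Y i z) with hjIY | hjIY | hjIY
    · -- i ≤ j < IY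
      rw [jr_eq_shift Y hz.ne' hji hjIY]
      have hYj1 : Y (j + 1) < Y i + z := by
        have : Y (j + 1) ≤ Y (jumpIndex Y i z) := hY.monotone (by omega)
        omega
      rcases lt_trichotomy j (jumpIndex X i (t - X i)) with hjI' | hjI' | hjI'
      · rw [jr_eq_shift X hz' hji hjI']
        exact hXY (j + 1)
      · subst hjI'
        rw [jr_eq_target X hz' hiI', hteq]
        exact hN hYj1
      · rw [jr_eq_self X hz' (Or.inr hjI')]
        exact hM j (hI'gt j hjI').le hYj1
    · -- j = IY
      rw [hjIY, jr_eq_target Y hz.ne' hiIY]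
      rcases lt_trichotomy (jumpIndex Y i z) (jumpIndex X i (t - X i)) with h | h | h
      · omega
      · rw [h, jr_eq_target X hz' hiI', hteq]
        -- need Y i + z ≤ t
        rcases eq_or_lt_of_le htb with hh | hh
        · omega
        · exfalso
          obtain ⟨m, hm⟩ := ht3 (Y i + z) (by omega) le_rfl
          have hmI : jumpIndex X i (t - X i) < m := by
            rcases le_or_gt m (jumpIndex X i (t - X i)) with h2 | h2
            · have := hX.monotone h2; omega
            · exact h2
          have h7 : X (jumpIndex Y i z + 1) ≤ X m := hX.monotone (by omega)
          have h8 := hXY (jumpIndex Y i z + 1)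
          have h9 := hIYsucc (jumpIndex Y i z + 1) (lt_add_one _)
          omega
      · rw [jr_eq_self X hz' (Or.inr h)]
        exact hL _ (hI'gt _ h).le (hIYsucc _ (lt_add_one _))
    · -- IY < j
      rw [jr_eq_self Y hz.ne' (Or.inr hjIY)]
      rcases lt_trichotomy j (jumpIndex X i (t - X i)) with hjI' | hjI' | hjI'
      · omega
      · omega
      · rw [jr_eq_self X hz' (Or.inr hjI')]
        exact hXY j

/-- Given ordered particle configurations `X ≥ Y` and a jump of the `i`-th
`Y`-particle by `z > 0` to an empty site, there is a jump size `z' ≥ 0` for the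
`i`-th `X`-particle (either `z' = 0`, or the target `X_i + z'` is empty and lies
at most at `Y_i + z`) such that the order `T_{i,z'} X ≥ T_{i,z} Y` is
preserved. -/
theorem coupling_preserves_order
    (X Y : ℤ → ℤ) (hX : StrictMono X) (hY : StrictMono Y)
    (hXY : ∀ k, Y k ≤ X k) (i z : ℤ) (hz : 0 < z)
    (hempty : Y i + z ∉ Set.range Y) :
    ∃ z' : ℤ, 0 ≤ z' ∧
      (z' = 0 ∨ (X i + z' ∉ Set.range X ∧ X i + z' ≤ Y i + z)) ∧
      ∀ j, jumpRelabel Y i z j ≤ jumpRelabel X i z' j := by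
  by_cases hpack : ∀ s : ℤ, X i < s → s ≤ Y i + z → s ∈ Set.range X
  · -- no empty site: z' = 0, i.e. t = X i
    refine ⟨0, le_rfl, Or.inl rfl, ?_⟩
    have := coupling_aux X Y hX hY hXY i z hz hempty (X i) le_rfl (Or.inl rfl) hpack
    simpa using this
  · -- take t = the largest empty X-site in (X i, Y i + z]
    push_neg at hpack
    obtain ⟨s₀, hs₀1, hs₀2, hs₀3⟩ := hpack
    set S : Set ℤ := {s : ℤ | X i < s ∧ s ≤ Y i + z ∧ s ∉ Set.range X} with hSdef
    have hSne : S.Nonempty := ⟨s₀, hs₀1, hs₀2, hs₀3⟩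
    have hSbdd : BddAbove S := ⟨Y i + z, fun s hs => hs.2.1⟩
    have htmem : sSup S ∈ S := Int.csSup_mem hSne hSbdd
    obtain ⟨ht1, ht2, ht3⟩ := htmem
    refine ⟨sSup S - X i, by omega, Or.inr ⟨?_, ?_⟩, ?_⟩
    · rw [show X i + (sSup S - X i) = sSup S by ring]; exact ht3
    · omega
    · refine coupling_aux X Y hX hY hXY i z hz hempty (sSup S) (by omega)
        (Or.inr ⟨ht3, ht2⟩) ?_
      intro s hs1 hs2
      by_contra hs3
      have : s ∈ S := ⟨by omega, hs2, hs3⟩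
      have := le_csSup hSbdd this
      omega
end
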